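/- Let t = f - f' > 0, ℓ' < ℓ - t, and x₀, x₁, x₂ ∈ [0, 2^ℓ) with x₀ + x₁ + x₂ ≡ x (mod 2^ℓ), where x ∈ [0, 2^ℓ). Then there exists w' ∈ {0, 1, 2} such that ⌊x/2^t⌋ ≡ ⌊x₀/2^t⌋ + ⌊x₁/2^t⌋ + ⌊x₂/2^t⌋ + w' (mod 2^{ℓ'}). -/
import Mathlib


/-- Downcast with truncation: local right-shift of the shares is correct up to a carry
w' ∈ {0,1,2} modulo 2^ℓ'. -/
theorem stmt2 (ℓ ℓ' f f' t : ℕ) (ht : t = f - f') (htpos : 0 < t) (hff' : f' < f)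
    (hℓ : ℓ' < ℓ - t)
    (x x₀ x₁ x₂ : ℤ)
    (hx : 0 ≤ x ∧ x < 2 ^ ℓ)
    (h₀ : 0 ≤ x₀ ∧ x₀ < 2 ^ ℓ) (h₁ : 0 ≤ x₁ ∧ x₁ < 2 ^ ℓ) (h₂ : 0 ≤ x₂ ∧ x₂ < 2 ^ ℓ)
    (hcong : (x₀ + x₁ + x₂) % 2 ^ ℓ = x % 2 ^ ℓ) :
    ∃ w' : ℤ, (w' = 0 ∨ w' = 1 ∨ w' = 2) ∧
      (x / 2 ^ t) % 2 ^ ℓ' = (x₀ / 2 ^ t + x₁ / 2 ^ t + x₂ / 2 ^ t + w') % 2 ^ ℓ' := by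
  have htle : t ≤ ℓ := by omega
  have hdvd : (2:ℤ) ^ ℓ ∣ (x - (x₀ + x₁ + x₂)) := Int.ModEq.dvd hcong
  obtain ⟨k, hk⟩ := hdvd
  have htpos' : (0:ℤ) < 2 ^ t := by positivity
  have hℓpos : (0:ℤ) < 2 ^ ℓ := by positivity
  -- w := -k ∈ {0,1,2}
  have hkrange : k = 0 ∨ k = -1 ∨ k = -2 := by
    rcases hx with ⟨hx0, hx1⟩
    rcases h₀ with ⟨h00, h01⟩
    rcases h₁ with ⟨h10, h11⟩
    rcases h₂ with ⟨h20, h21⟩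
    have hub : k < 1 := lt_of_mul_lt_mul_left (by nlinarith) (le_of_lt hℓpos)
    have hlb : -3 < k := lt_of_mul_lt_mul_left (by nlinarith) (le_of_lt hℓpos)
    omega
  set c : ℤ := (x₀ % 2 ^ t + x₁ % 2 ^ t + x₂ % 2 ^ t) / 2 ^ t with hc
  have hcr : c = 0 ∨ c = 1 ∨ c = 2 := by
    have e0 := Int.emod_nonneg x₀ (by positivity : (2:ℤ)^t ≠ 0)
    have e1 := Int.emod_nonneg x₁ (by positivity : (2:ℤ)^t ≠ 0)
    have e2 := Int.emod_nonneg x₂ (by positivity : (2:ℤ)^t ≠ 0)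
    have l0 := Int.emod_lt_of_pos x₀ htpos'
    have l1 := Int.emod_lt_of_pos x₁ htpos'
    have l2 := Int.emod_lt_of_pos x₂ htpos'
    have hub : c < 3 := by
      rw [hc, Int.ediv_lt_iff_lt_mul htpos']; linarith
    have hlb : 0 ≤ c := Int.ediv_nonneg (by linarith) (le_of_lt htpos')
    omega
  refine ⟨c, hcr, ?_⟩
  -- key: x / 2^t = x₀/2^t + x₁/2^t + x₂/2^t + c + k * 2^(ℓ - t)
  have hsplit : ∀ y : ℤ, y = 2 ^ t * (y / 2 ^ t) + y % 2 ^ t := fun y => (Int.mul_ediv_add_emod y _).symm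
  have hxeq : x = 2 ^ t * (x₀ / 2 ^ t + x₁ / 2 ^ t + x₂ / 2 ^ t + k * 2 ^ (ℓ - t))
      + (x₀ % 2 ^ t + x₁ % 2 ^ t + x₂ % 2 ^ t) := by
    have h2 : (2:ℤ) ^ ℓ = 2 ^ t * 2 ^ (ℓ - t) := by
      rw [← pow_add]; congr 1; omega
    have := hsplit x₀; have := hsplit x₁; have := hsplit x₂
    rw [h2] at hk; ring_nf; ring_nf at hk ⊢; nlinarith [hk]
  have hdiv : x / 2 ^ t = x₀ / 2 ^ t + x₁ / 2 ^ t + x₂ / 2 ^ t + k * 2 ^ (ℓ - t) + c := by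
    rw [hc]
    conv_lhs => rw [hxeq]
    rw [mul_comm ((2:ℤ)^t), add_comm, Int.add_mul_ediv_right _ _ (ne_of_gt htpos')]
    ring
  rw [hdiv]
  have h2d : (2:ℤ) ^ ℓ' ∣ 2 ^ (ℓ - t) := pow_dvd_pow 2 (by omega)
  obtain ⟨m, hm⟩ := h2d
  rw [hm]
  have : x₀ / 2 ^ t + x₁ / 2 ^ t + x₂ / 2 ^ t + k * (2 ^ ℓ' * m) + c
      = (x₀ / 2 ^ t + x₁ / 2 ^ t + x₂ / 2 ^ t + c) + (k * m) * 2 ^ ℓ' := by ring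
  rw [this, Int.add_mul_emod_self_right]
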